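/- Let P be a collection of perfect subtrees of Ω^{<ω} closed under restriction (T_s ∈ P for T ∈ P, s ∈ T) and containing the full tree. For any T ∈ P, the set [T] of branches is not in I*_P; i.e., there is no S ≤ T with [S] ∈ I_P. -/
import Mathlib


open Set

noncomputable section

/-- The restriction `x↾n` of `x : ℕ → α` to its first `n` values, as a list. -/
def res {α : Type*} (x : ℕ → α) (n : ℕ) : List α := List.ofFn (fun i : Fin n => x i)

/-- A (set-theoretic) tree on `α`: a collection of finite sequences closed under
initial segments. -/
def IsTree {α : Type*} (T : Set (List α)) : Prop :=
  ∀ s ∈ T, ∀ t : List α, t <+: s → t ∈ T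

/-- The set `[T]` of branches of a tree `T`. -/
def branches {α : Type*} (T : Set (List α)) : Set (ℕ → α) :=
  {x | ∀ n : ℕ, res x n ∈ T}

/-- A perfect tree: a nonempty tree with a splitting node above every node. -/
def IsPerfectTree {α : Type*} (T : Set (List α)) : Prop :=
  IsTree T ∧ T.Nonempty ∧
    ∀ s ∈ T, ∃ t ∈ T, s <+: t ∧ ∃ a b : α, a ≠ b ∧ t ++ [a] ∈ T ∧ t ++ [b] ∈ T

/-- A tree forcing: a collection of perfect trees containing the full tree and closed
under restriction `T ↦ T_u`. -/
def IsTreeForcing {α : Type*} (P : Set (Set (List α))) : Prop :=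
  (∀ T ∈ P, IsPerfectTree T) ∧ Set.univ ∈ P ∧
    ∀ T ∈ P, ∀ u ∈ T, {t ∈ T | u <+: t ∨ t <+: u} ∈ P

/-- `A` is `P`-nowhere dense. -/
def PNwd {α : Type*} (P : Set (Set (List α))) (A : Set (ℕ → α)) : Prop :=
  ∀ T ∈ P, ∃ S ∈ P, S ⊆ T ∧ branches S ∩ A = ∅

/-- `A` belongs to the σ-ideal `I_P` generated by the `P`-nowhere dense sets. -/
def PIdeal {α : Type*} (P : Set (Set (List α))) (A : Set (ℕ → α)) : Prop :=
  ∃ f : ℕ → Set (ℕ → α), (∀ n, PNwd P (f n)) ∧ A ⊆ ⋃ n, f n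

/-- `A` belongs to the auxiliary ideal `I*_P`. -/
def PIstar {α : Type*} (P : Set (Set (List α))) (A : Set (ℕ → α)) : Prop :=
  ∀ T ∈ P, ∃ S ∈ P, S ⊆ T ∧ PIdeal P (branches S ∩ A)

/-- `A` is `P`-measurable. -/
def PMeasurable {α : Type*} (P : Set (Set (List α))) (A : Set (ℕ → α)) : Prop :=
  ∀ T ∈ P, ∃ S ∈ P, S ⊆ T ∧ (PIdeal P (branches S \ A) ∨ PIdeal P (branches S ∩ A))

/-- Compatibility of two conditions in the tree forcing `P`. -/
def Compat {α : Type*} (P : Set (Set (List α))) (S T : Set (List α)) : Prop :=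
  ∃ R ∈ P, R ⊆ S ∧ R ⊆ T

/-- `D` is an antichain in the tree forcing `P`. -/
def IsAntichainIn {α : Type*} (P D : Set (Set (List α))) : Prop :=
  D ⊆ P ∧ ∀ S ∈ D, ∀ T ∈ D, S ≠ T → ¬ Compat P S T

/-- `D` is a maximal antichain in the tree forcing `P`. -/
def IsMaxAntichainIn {α : Type*} (P D : Set (Set (List α))) : Prop :=
  IsAntichainIn P D ∧ ∀ T ∈ P, ∃ S ∈ D, Compat P S T

/-- `s` is the stem of the tree `T`: the longest node comparable with all nodes of `T`. -/
def IsStem {α : Type*} (T : Set (List α)) (s : List α) : Prop :=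
  s ∈ T ∧ (∀ t ∈ T, s <+: t ∨ t <+: s) ∧
    ∀ s' ∈ T, (∀ t ∈ T, s' <+: t ∨ t <+: s') → s'.length ≤ s.length

/-- For any tree forcing `P` and any `T ∈ P`, the branch set `[T]` is not in `I*_P`;
i.e. there is no `S ≤ T` with `[S] ∈ I_P`. -/

lemma perfect_long {α : Type*} {T : Set (List α)} (hT : IsPerfectTree T) :
    ∀ m : ℕ, ∃ u ∈ T, m ≤ u.length := by
  intro m
  induction m with
  | zero => obtain ⟨s, hs⟩ := hT.2.1; exact ⟨s, hs, Nat.zero_le _⟩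
  | succ m ih =>
    obtain ⟨u, hu, hlen⟩ := ih
    obtain ⟨t, ht, hpre, a, b, hab, hta, -⟩ := hT.2.2 u hu
    refine ⟨t ++ [a], hta, ?_⟩
    have := hpre.length_le
    simp only [List.length_append, List.length_singleton]
    omega

lemma step_lemma {α : Type*} {P : Set (Set (List α))} (hP : IsTreeForcing P)
    {A : Set (ℕ → α)} (hA : PNwd P A) {S : Set (List α)} (hS : S ∈ P)
    {s : List α} (hs : s ∈ S) :
    ∃ S' ∈ P, ∃ s' ∈ S', S' ⊆ S ∧ s <+: s' ∧ s.length < s'.length ∧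
      branches S' ∩ A = ∅ := by
  have hperf := hP.1 S hS
  obtain ⟨t, ht, hst, a, b, hab, hta, -⟩ := hperf.2.2 s hs
  set s' := t ++ [a] with hs'def
  have hs'S : s' ∈ S := hta
  have hss' : s <+: s' := hst.trans ⟨[a], rfl⟩
  have hlen : s.length < s'.length := by
    have := hst.length_le
    simp only [hs'def, List.length_append, List.length_singleton]
    omega
  have hR : {u ∈ S | s' <+: u ∨ u <+: s'} ∈ P := hP.2.2 S hS s' hs'S
  obtain ⟨S', hS', hsub, hempty⟩ := hA _ hR
  have hS'S : S' ⊆ S := fun u hu => (hsub hu).1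
  obtain ⟨u, hu, hulen⟩ := perfect_long (hP.1 S' hS') s'.length
  have hs'S' : s' ∈ S' := by
    rcases (hsub hu).2 with h | h
    · exact (hP.1 S' hS').1 u hu s' h
    · rw [h.eq_of_length_le hulen] at hu; exact hu
  exact ⟨S', hS', s', hs'S', hS'S, hss', hlen, hempty⟩

lemma not_pideal {α : Type*} {P : Set (Set (List α))} (hP : IsTreeForcing P)
    {S : Set (List α)} (hS : S ∈ P) : ¬ PIdeal P (branches S) := by
  rintro ⟨f, hf, hsub⟩
  obtain ⟨s0, hs0⟩ := (hP.1 S hS).2.1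
  have step : ∀ (n : ℕ) (q : {p : Set (List α) × List α // p.1 ∈ P ∧ p.2 ∈ p.1}),
      ∃ q' : {p : Set (List α) × List α // p.1 ∈ P ∧ p.2 ∈ p.1},
        q'.1.1 ⊆ q.1.1 ∧ q.1.2 <+: q'.1.2 ∧ q.1.2.length < q'.1.2.length ∧
          branches q'.1.1 ∩ f n = ∅ := by
    rintro n ⟨⟨Sq, sq⟩, hSq, hsq⟩
    obtain ⟨S', hS', s', hs', h1, h2, h3, h4⟩ := step_lemma hP (hf n) hSq hsq
    exact ⟨⟨(S', s'), hS', hs'⟩, h1, h2, h3, h4⟩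
  choose F hF1 hF2 hF3 hF4 using step
  set g : ℕ → {p : Set (List α) × List α // p.1 ∈ P ∧ p.2 ∈ p.1} :=
    fun n => Nat.rec ⟨(S, s0), hS, hs0⟩ F n with hg
  have hgs : ∀ n, g (n + 1) = F n (g n) := fun n => rfl
  -- monotonicity facts
  have mono : ∀ m n, m ≤ n → (g n).1.1 ⊆ (g m).1.1 := by
    intro m n hmn
    induction n with
    | zero => rw [Nat.le_zero.mp hmn]
    | succ n ih =>
      rcases Nat.lt_or_ge m (n + 1) with h | h
      · exact fun u hu => ih (Nat.lt_succ_iff.mp h) (hF1 n (g n) hu)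
      · rw [le_antisymm hmn h]
  have pre : ∀ m n, m ≤ n → (g m).1.2 <+: (g n).1.2 := by
    intro m n hmn
    induction n with
    | zero => rw [Nat.le_zero.mp hmn]
    | succ n ih =>
      rcases Nat.lt_or_ge m (n + 1) with h | h
      · exact (ih (Nat.lt_succ_iff.mp h)).trans (hF2 n (g n))
      · rw [le_antisymm hmn h]
  have glen : ∀ n, n ≤ ((g n).1.2).length := by
    intro n
    induction n with
    | zero => exact Nat.zero_le _
    | succ n ih => exact Nat.lt_of_le_of_lt ih (hF3 n (g n))
  -- the generic branch
  have hxlt : ∀ k : ℕ, k < ((g (k + 1)).1.2).length := fun k =>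
    Nat.lt_of_lt_of_le (Nat.lt_succ_self k) (glen (k + 1))
  set x : ℕ → α := fun k => ((g (k + 1)).1.2)[k]'(hxlt k) with hx
  have key : ∀ n m, m ≤ ((g n).1.2).length → res x m <+: (g n).1.2 := by
    intro n m hm
    have : res x m = ((g n).1.2).take m := by
      apply List.ext_getElem
      · simp [res, List.length_take]; omega
      · intro i h1 h2
        have him : i < m := by simpa [res] using h1
        have hin : i < ((g n).1.2).length := Nat.lt_of_lt_of_le him hm
        simp only [res, List.getElem_ofFn, List.getElem_take]
        show x i = _
        rw [hx]
        rcases Nat.le_total (i + 1) n with h | h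
        · exact (pre (i + 1) n h).getElem (hxlt i)
        · exact ((pre n (i + 1) h).getElem hin).symm
    rw [this]
    exact List.take_prefix m _
  have hbr : ∀ n, x ∈ branches ((g n).1.1) := by
    intro n m
    set k := max n m with hk
    have hmk : m ≤ ((g k).1.2).length := le_trans (le_max_right n m) (glen k)
    have h1 : res x m <+: (g k).1.2 := key k m hmk
    have h2 : (g k).1.2 ∈ (g n).1.1 := mono n k (le_max_left n m) (g k).2.2
    exact (hP.1 _ (g n).2.1).1 _ h2 _ h1
  have hxS : x ∈ branches S := hbr 0
  obtain ⟨_, ⟨n, rfl⟩, hxn⟩ := hsub hxS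
  have : x ∈ branches ((g (n + 1)).1.1) ∩ f n := ⟨hbr (n + 1), hxn⟩
  rw [hgs n, hF4 n (g n)] at this
  exact this

lemma branches_mono {α : Type*} {S T : Set (List α)} (h : S ⊆ T) :
    branches S ⊆ branches T := fun x hx n => h (hx n)

theorem stmt6 {α : Type*} (P : Set (Set (List α))) (hP : IsTreeForcing P)
    (T : Set (List α)) (hT : T ∈ P) :
    ¬ PIstar P (branches T) ∧ ∀ S ∈ P, S ⊆ T → ¬ PIdeal P (branches S) := by
  have h2 : ∀ S ∈ P, S ⊆ T → ¬ PIdeal P (branches S) := fun S hS _ => not_pideal hP hS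
  refine ⟨fun h => ?_, h2⟩
  obtain ⟨S, hS, hST, hid⟩ := h T hT
  have : branches S ∩ branches T = branches S :=
    Set.inter_eq_left.mpr (branches_mono hST)
  rw [this] at hid
  exact h2 S hS hST hid
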